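/- Right pseudo-Ore condition: if (a,C₁,x^t) ≤ (b,C₂,y^t), then [a:C₁:x^t] = [b:C₂:y^t] in Σ⁻¹X, i.e., (a,C₁,x^t) ∼ (b,C₂,y^t). -/

import Mathlib

open Matrix

variable {R X : Type*}

/-- Action of a matrix over `R` on a column of module elements. -/
def mulVecX [Ring R] [AddCommGroup X] [Module R X] {m n : ℕ}
    (A : Matrix (Fin m) (Fin n) R) (x : Fin n → X) : Fin m → X :=
  fun i => ∑ j, A i j • x j

/-- An ordered triple `(a, C, xᵗ)` with `a ∈ Rⁿ`, `C` an `n × n` matrix, `x ∈ Xⁿ`. -/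
structure Triple (R X : Type*) [Ring R] [AddCommGroup X] [Module R X] where
  n : ℕ
  a : Fin n → R
  C : Matrix (Fin n) (Fin n) R
  x : Fin n → X

namespace Triple

variable [Ring R] [AddCommGroup X] [Module R X]

/-- Block sum of ordered triples: `([a b], diag(C,D), [xᵗ; yᵗ])`. -/
def add (t s : Triple R X) : Triple R X where
  n := t.n + s.n
  a := Fin.append t.a s.a
  C := (Matrix.fromBlocks t.C 0 0 s.C).submatrix
        (finSumFinEquiv (m := t.n) (n := s.n)).symm finSumFinEquiv.symm
  x := Fin.append t.x s.x

/-- The congruence relation `≡`: same size, witnessed by invertible matrices `U₁, U₂`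
with `a = b U₁`, `yᵗ = U₂ xᵗ` and `C₂ U₁ = U₂ C₁`. -/
def Cong (t s : Triple R X) : Prop :=
  ∃ (h : t.n = s.n) (U₁ U₂ : Matrix (Fin t.n) (Fin t.n) R),
    IsUnit U₁ ∧ IsUnit U₂ ∧
    t.a = (fun j => s.a (Fin.cast h j)) ᵥ* U₁ ∧
    (fun i => s.x (Fin.cast h i)) = mulVecX U₂ t.x ∧
    s.C.submatrix (Fin.cast h) (Fin.cast h) * U₁ = U₂ * t.C

/-- The relation `(a,C₁,xᵗ) ≥ (b,C₂,yᵗ)`: there are matrices `A₁, A₂` with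
`a = b A₁`, `yᵗ = A₂ xᵗ` and `C₂ A₁ = A₂ C₁`. -/
def Ge (t s : Triple R X) : Prop :=
  ∃ A₁ A₂ : Matrix (Fin s.n) (Fin t.n) R,
    t.a = s.a ᵥ* A₁ ∧ s.x = mulVecX A₂ t.x ∧ s.C * A₁ = A₂ * t.C

/-- The relation `(a,C₁,xᵗ) ≤ (b,C₂,yᵗ)`: there are matrices `A₁, A₂` with
`xᵗ = A₁ yᵗ`, `b = a A₂` and `C₁ A₂ = A₁ C₂`. -/
def Le (t s : Triple R X) : Prop :=
  ∃ A₁ A₂ : Matrix (Fin t.n) (Fin s.n) R,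
    t.x = mulVecX A₁ s.x ∧ s.a = t.a ᵥ* A₂ ∧ t.C * A₂ = A₁ * s.C

end Triple

/-- A size-indexed collection of square matrices over `R`. -/
def MatSet (R : Type*) [Ring R] := ∀ n : ℕ, Set (Matrix (Fin n) (Fin n) R)

/-- `S` is a multiplicative set of matrices: it contains all permutation matrices,
is closed under products, and closed under block upper triangular combinations. -/
def IsMatMultSet [Ring R] (S : MatSet R) : Prop :=
  (∀ (n : ℕ) (σ : Equiv.Perm (Fin n)), σ.permMatrix R ∈ S n) ∧
  (∀ (n : ℕ) (C D : Matrix (Fin n) (Fin n) R), C ∈ S n → D ∈ S n → C * D ∈ S n) ∧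
  (∀ (n m : ℕ) (C : Matrix (Fin n) (Fin n) R) (D : Matrix (Fin m) (Fin m) R)
      (A : Matrix (Fin n) (Fin m) R), C ∈ S n → D ∈ S m →
    (Matrix.fromBlocks C A 0 D).submatrix finSumFinEquiv.symm finSumFinEquiv.symm ∈ S (n + m))

/-- The trivial triples `Σ⁻¹X₀`: finite sums of triples `(0,C,xᵗ)` and `(b,D,0ᵗ)` with
`C, D ∈ Σ`. -/
inductive IsTrivial [Ring R] [AddCommGroup X] [Module R X] (S : MatSet R) :
    Triple R X → Prop
  | zeroA (n : ℕ) (C : Matrix (Fin n) (Fin n) R) (x : Fin n → X) (hC : C ∈ S n) :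
      IsTrivial S ⟨n, 0, C, x⟩
  | zeroX (n : ℕ) (b : Fin n → R) (C : Matrix (Fin n) (Fin n) R) (hC : C ∈ S n) :
      IsTrivial S ⟨n, b, C, 0⟩
  | add {t s : Triple R X} : IsTrivial S t → IsTrivial S s → IsTrivial S (t.add s)

/-- The relation `∼`: triples become congruent after adding trivial triples. -/
def Sim [Ring R] [AddCommGroup X] [Module R X] (S : MatSet R) (t s : Triple R X) : Prop :=
  ∃ z₁ z₂ : Triple R X, IsTrivial S z₁ ∧ IsTrivial S z₂ ∧ (t.add z₁).Cong (s.add z₂)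
lemma append_eq_elim {α : Type*} {p q : ℕ} (u : Fin p → α) (v : Fin q → α) :
    Fin.append u v = Sum.elim u v ∘ ⇑(finSumFinEquiv (m := p) (n := q)).symm := by
  funext j
  obtain ⟨k, rfl⟩ := finSumFinEquiv.surjective j
  cases k <;> simp

/-- Right pseudo-Ore condition: if `(a,C₁,xᵗ) ≤ (b,C₂,yᵗ)` then `(a,C₁,xᵗ) ∼ (b,C₂,yᵗ)`. -/
theorem le_imp_sim [Ring R] [AddCommGroup X] [Module R X] (S : MatSet R)
    (hS : IsMatMultSet S) (t s : Triple R X) (ht : t.C ∈ S t.n) (hs : s.C ∈ S s.n)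
    (h : t.Le s) : Sim S t s := by
  obtain ⟨A₁, A₂, hx, hb, hC⟩ := h
  refine ⟨⟨s.n, 0, s.C, s.x⟩, ⟨t.n, t.a, t.C, 0⟩,
    IsTrivial.zeroA _ _ _ hs, IsTrivial.zeroX _ _ _ ht, ?_⟩
  have hnm : t.n + s.n = s.n + t.n := Nat.add_comm _ _
  dsimp only [Triple.Cong, Triple.add]
  set e₁ : (Fin t.n ⊕ Fin s.n) ≃ Fin (t.n + s.n) := finSumFinEquiv with he₁
  set e₂ : (Fin s.n ⊕ Fin t.n) ≃ Fin (s.n + t.n) := finSumFinEquiv with he₂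
  set φ : Fin (t.n + s.n) ≃ (Fin s.n ⊕ Fin t.n) := (finCongr hnm).trans e₂.symm with hφ
  have hφc : ∀ i, φ i = e₂.symm (Fin.cast hnm i) := fun i => rfl
  refine ⟨hnm, (fromBlocks 0 1 1 (-A₂)).submatrix ⇑φ ⇑e₁.symm,
          (fromBlocks 0 1 1 (-A₁)).submatrix ⇑φ ⇑e₁.symm, ?_, ?_, ?_, ?_, ?_⟩
  · -- U₁ is a unit
    refine isUnit_iff_exists.mpr ⟨(fromBlocks A₂ 1 1 0).submatrix ⇑e₁.symm ⇑φ, ?_, ?_⟩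
    · rw [Matrix.submatrix_mul_equiv, Matrix.fromBlocks_multiply]
      simp only [Matrix.zero_mul, Matrix.mul_zero, Matrix.one_mul, Matrix.mul_one,
        zero_add, add_zero, Matrix.neg_mul, Matrix.mul_neg, add_neg_cancel, neg_zero]
      rw [Matrix.fromBlocks_one, Matrix.submatrix_one_equiv]
    · rw [Matrix.submatrix_mul_equiv, Matrix.fromBlocks_multiply]
      simp only [Matrix.zero_mul, Matrix.mul_zero, Matrix.one_mul, Matrix.mul_one,
        zero_add, add_zero, Matrix.neg_mul, Matrix.mul_neg, add_neg_cancel, neg_zero]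
      rw [Matrix.fromBlocks_one, Matrix.submatrix_one_equiv]
  · -- U₂ is a unit
    refine isUnit_iff_exists.mpr ⟨(fromBlocks A₁ 1 1 0).submatrix ⇑e₁.symm ⇑φ, ?_, ?_⟩
    · rw [Matrix.submatrix_mul_equiv, Matrix.fromBlocks_multiply]
      simp only [Matrix.zero_mul, Matrix.mul_zero, Matrix.one_mul, Matrix.mul_one,
        zero_add, add_zero, Matrix.neg_mul, Matrix.mul_neg, add_neg_cancel, neg_zero]
      rw [Matrix.fromBlocks_one, Matrix.submatrix_one_equiv]
    · rw [Matrix.submatrix_mul_equiv, Matrix.fromBlocks_multiply]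
      simp only [Matrix.zero_mul, Matrix.mul_zero, Matrix.one_mul, Matrix.mul_one,
        zero_add, add_zero, Matrix.neg_mul, Matrix.mul_neg, add_neg_cancel, neg_zero]
      rw [Matrix.fromBlocks_one, Matrix.submatrix_one_equiv]
  · -- row vector condition
    have h1 : (fun j => Fin.append s.a t.a (Fin.cast hnm j)) = Sum.elim s.a t.a ∘ ⇑φ := by
      funext j
      rw [append_eq_elim]
      simp only [Function.comp_apply, hφc]
      rfl
    rw [h1, Matrix.submatrix_vecMul_equiv]
    have h2 : (Sum.elim s.a t.a ∘ ⇑φ) ∘ ⇑φ.symm = Sum.elim s.a t.a := by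
      funext k; simp
    rw [h2, Matrix.vecMul_fromBlocks, append_eq_elim t.a]
    simp [Matrix.vecMul_zero, Matrix.vecMul_one, Matrix.vecMul_neg, hb]
    rfl
  · -- module elements condition
    have key : ∀ k : Fin s.n ⊕ Fin t.n,
        Sum.elim s.x (0 : Fin t.n → X) k =
          ∑ p : Fin t.n ⊕ Fin s.n,
            (fromBlocks (0 : Matrix (Fin s.n) (Fin t.n) R) 1 1 (-A₁)) k p •
              Sum.elim t.x s.x p := by
      intro k
      rw [Fintype.sum_sum_type]
      cases k with
      | inl p =>
        simp [Matrix.one_apply, ite_smul]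
      | inr q =>
        have hq := congrFun hx q
        simp only [mulVecX] at hq
        simp [Matrix.one_apply, ite_smul, neg_smul, hq, Finset.sum_neg_distrib]
    funext i
    dsimp only [mulVecX]
    rw [append_eq_elim s.x, append_eq_elim t.x]
    simp only [Function.comp_apply]
    calc Sum.elim s.x 0 (e₂.symm (Fin.cast hnm i))
        = ∑ p : Fin t.n ⊕ Fin s.n,
            (fromBlocks (0 : Matrix (Fin s.n) (Fin t.n) R) 1 1 (-A₁))
              (e₂.symm (Fin.cast hnm i)) p • Sum.elim t.x s.x p := key _
      _ = ∑ j, (fromBlocks (0 : Matrix (Fin s.n) (Fin t.n) R) 1 1 (-A₁)).submatrix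
            ⇑φ ⇑e₁.symm i j • Sum.elim t.x s.x (e₁.symm j) :=
          (Fintype.sum_equiv e₁.symm _ _ fun j => rfl).symm
  · -- matrix condition
    have h3 : (⇑e₂.symm ∘ Fin.cast hnm : Fin (t.n + s.n) → Fin s.n ⊕ Fin t.n) = ⇑φ := by
      funext i; exact (hφc i).symm
    rw [Matrix.submatrix_submatrix, h3, Matrix.submatrix_mul_equiv,
      Matrix.submatrix_mul_equiv, Matrix.fromBlocks_multiply, Matrix.fromBlocks_multiply]
    simp [Matrix.mul_neg, Matrix.neg_mul, hC]
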